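/- Let f satisfy the standing assumptions and let the variance-reduced accelerated SGD iterates be generated by y_{k+1} = x_k − α(∇f(x_k) + w_{k,N_k}) and x_{k+1} = y_{k+1} + β(y_{k+1} − y_k) with x_0 = y_0, α ∈ (0, 1/L], γ = √(αη), β = (1−γ)/(1+γ), and batch sizes N_k = ⌈ρ₂^{−(k+1)}⌉ with ρ₂ ∈ (1−γ, 1). Then for every k ≥ 0, E[f(y_k)] − f* ≤ ρ₂^k · ( ((η+L)/2)·E[‖x_0 − x*‖²] + (ρ₂ ν²/(ρ₂ − (1−γ)))·(α + (1−γ)γ/(2η)) ), and moreover there exists a constant c > 0 such that E[‖x_k − x*‖²] ≤ c · ρ₂^k for all k. -/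

import Mathlib

open MeasureTheory Filter Real
open scoped Topology RealInnerProductSpace
set_option maxHeartbeats 2000000


variable {m : ℕ}
local notation "E" => EuclideanSpace ℝ (Fin m)

lemma line_deriv {f : E → ℝ} (hf : ContDiff ℝ 1 f) (a d : E) (t : ℝ) :
    HasDerivAt (fun s : ℝ => f (a + s • d)) ⟪gradient f (a + t • d), d⟫ t := by
  have hline : HasDerivAt (fun s : ℝ => a + s • d) d t := by
    simpa using ((hasDerivAt_id t).smul_const d).const_add a
  have hgrad : HasGradientAt f (gradient f (a + t • d)) (a + t • d) :=
    (hf.differentiable one_ne_zero _).hasGradientAt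
  have hfd := (hasGradientAt_iff_hasFDerivAt.1 hgrad)
  have := hfd.comp_hasDerivAt t hline
  simpa [InnerProductSpace.toDual_apply_apply, Function.comp_def] using this

lemma cont_grad {f : E → ℝ} (hf : ContDiff ℝ 1 f) : Continuous (gradient f) := by
  have h := hf.continuous_fderiv one_ne_zero
  have : gradient f = fun x => (InnerProductSpace.toDual ℝ E).symm (fderiv ℝ f x) := rfl
  rw [this]
  exact (InnerProductSpace.toDual ℝ E).symm.continuous.comp h

lemma integrand_cont {f : E → ℝ} (hf : ContDiff ℝ 1 f) (a d : E) :
    Continuous (fun t : ℝ => ⟪gradient f (a + t • d), d⟫) :=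
  continuous_inner.comp (((cont_grad hf).comp (by continuity)).prodMk continuous_const)

lemma fund {f : E → ℝ} (hf : ContDiff ℝ 1 f) (a b : E) :
    f b - f a = ∫ t in (0:ℝ)..1, ⟪gradient f (a + t • (b - a)), b - a⟫ := by
  have h := intervalIntegral.integral_eq_sub_of_hasDerivAt
    (f := fun s : ℝ => f (a + s • (b - a)))
    (f' := fun t : ℝ => ⟪gradient f (a + t • (b - a)), b - a⟫)
    (a := 0) (b := 1)
    (fun t _ => line_deriv hf a (b - a) t) ((integrand_cont hf a (b-a)).intervalIntegrable 0 1)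
  simpa using h.symm

lemma int01 (A B : ℝ) : (∫ t in (0:ℝ)..1, (A + B * t)) = A + B / 2 := by
  have h2 : IntervalIntegrable (fun t : ℝ => B * t) MeasureTheory.volume 0 1 := by
    apply Continuous.intervalIntegrable; fun_prop
  rw [intervalIntegral.integral_add (intervalIntegrable_const) h2,
    intervalIntegral.integral_const, intervalIntegral.integral_const_mul, integral_id]
  simp; ring

lemma smooth_ub {f : E → ℝ} {L : ℝ} (hf : ContDiff ℝ 1 f)
    (hlip : ∀ a b, ‖gradient f a - gradient f b‖ ≤ L * ‖a - b‖) (a b : E) :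
    f b ≤ f a + ⟪gradient f a, b - a⟫ + L / 2 * ‖b - a‖ ^ 2 := by
  have h := fund hf a b
  have hmono : (∫ t in (0:ℝ)..1, ⟪gradient f (a + t • (b - a)), b - a⟫) ≤
      ∫ t in (0:ℝ)..1, (⟪gradient f a, b - a⟫ + (L * ‖b - a‖ ^ 2) * t) := by
    apply intervalIntegral.integral_mono_on (by norm_num)
      ((integrand_cont hf a (b-a)).intervalIntegrable 0 1)
      (Continuous.intervalIntegrable (by fun_prop) 0 1)
    intro t ht
    have key : ⟪gradient f (a + t • (b - a)) - gradient f a, b - a⟫ ≤ L * t * ‖b - a‖ ^ 2 := by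
      calc ⟪gradient f (a + t • (b - a)) - gradient f a, b - a⟫
          ≤ ‖gradient f (a + t • (b - a)) - gradient f a‖ * ‖b - a‖ :=
            real_inner_le_norm _ _
        _ ≤ (L * ‖(a + t • (b - a)) - a‖) * ‖b - a‖ := by
            apply mul_le_mul_of_nonneg_right (hlip _ _) (norm_nonneg _)
        _ = L * t * ‖b - a‖ ^ 2 := by
            rw [add_sub_cancel_left, norm_smul]
            simp [abs_of_nonneg ht.1]; ring
    rw [inner_sub_left] at key
    linarith
  rw [int01] at hmono
  linarith [h, hmono]

lemma sc_lb {f : E → ℝ} {η : ℝ} (hf : ContDiff ℝ 1 f)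
    (hsc : ∀ a b, η * ‖a - b‖ ^ 2 ≤ ⟪gradient f a - gradient f b, a - b⟫) (a b : E) :
    f a + ⟪gradient f a, b - a⟫ + η / 2 * ‖b - a‖ ^ 2 ≤ f b := by
  have h := fund hf a b
  have hmono : (∫ t in (0:ℝ)..1, (⟪gradient f a, b - a⟫ + (η * ‖b - a‖ ^ 2) * t)) ≤
      ∫ t in (0:ℝ)..1, ⟪gradient f (a + t • (b - a)), b - a⟫ := by
    apply intervalIntegral.integral_mono_on (by norm_num)
      (Continuous.intervalIntegrable (by fun_prop) 0 1)
      ((integrand_cont hf a (b-a)).intervalIntegrable 0 1)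
    intro t ht
    have key : η * t * ‖b - a‖ ^ 2 ≤ ⟪gradient f (a + t • (b - a)) - gradient f a, b - a⟫ := by
      rcases eq_or_lt_of_le ht.1 with h0 | h0
      · rw [← h0]; simp
      · have h2 := hsc (a + t • (b - a)) a
        rw [add_sub_cancel_left, real_inner_smul_right] at h2
        have hn : ‖t • (b - a)‖ ^ 2 = t ^ 2 * ‖b - a‖ ^ 2 := by
          rw [norm_smul, Real.norm_eq_abs, abs_of_nonneg ht.1, mul_pow]
        rw [hn] at h2
        refine le_of_mul_le_mul_left ?_ h0
        calc t * (η * t * ‖b - a‖ ^ 2) = η * (t ^ 2 * ‖b - a‖ ^ 2) := by ring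
          _ ≤ t * ⟪gradient f (a + t • (b - a)) - gradient f a, b - a⟫ := h2
    rw [inner_sub_left] at key
    linarith
  rw [int01] at hmono
  linarith [h, hmono]

lemma grad_min_zero {f : E → ℝ} (hf : ContDiff ℝ 1 f) {xstar : E}
    (hmin : ∀ z, f xstar ≤ f z) : gradient f xstar = 0 := by
  have h : IsLocalMin f xstar := Filter.Eventually.of_forall hmin
  have h2 : fderiv ℝ f xstar = 0 := h.fderiv_eq_zero
  show (InnerProductSpace.toDual ℝ E).symm (fderiv ℝ f xstar) = 0
  rw [h2]; simp


lemma coord_sq_le {n : ℕ} (v : EuclideanSpace ℝ (Fin n)) (i : Fin n) :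
    ‖v i‖ ^ 2 ≤ ‖v‖ ^ 2 := by
  rw [PiLp.norm_sq_eq_of_L2]
  exact Finset.single_le_sum (f := fun j => ‖v j‖ ^ 2) (fun j _ => sq_nonneg _)
    (Finset.mem_univ i)

lemma coord_condexp_zero {Ω : Type*} {m' m0 : MeasurableSpace Ω} {μ : Measure Ω}
    [IsProbabilityMeasure μ] (hm : m' ≤ m0) {n : ℕ}
    {w : Ω → EuclideanSpace ℝ (Fin n)} (hw : Integrable w μ)
    (hw0 : μ[w | m'] =ᵐ[μ] 0) (i : Fin n) :
    (fun _ => (0:ℝ)) =ᵐ[μ] μ[fun ω => w ω i | m'] := by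
  refine ae_eq_condExp_of_forall_setIntegral_eq hm
    ((EuclideanSpace.proj (𝕜 := ℝ) i).integrable_comp hw)
    (fun s _ _ => integrableOn_const)
    (fun s hs hμs => ?_) ?_
  · have h1 : ∫ ω in s, w ω i ∂μ = (EuclideanSpace.proj (𝕜 := ℝ) i) (∫ ω in s, w ω ∂μ) :=
      ((EuclideanSpace.proj (𝕜 := ℝ) i).integral_comp_comm hw.integrableOn)
    have h2 : ∫ ω in s, w ω ∂μ = ∫ ω in s, (μ[w | m']) ω ∂μ := (setIntegral_condExp hm hw hs).symm
    have h3 : ∫ ω in s, (μ[w | m']) ω ∂μ = 0 := by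
      rw [setIntegral_congr_ae (hm s hs) (hw0.mono fun ω h _ => h)]
      simp
    rw [h1, h2, h3]
    simp
  · exact StronglyMeasurable.aestronglyMeasurable (stronglyMeasurable_const)

lemma prod_coord_int {Ω : Type*} {m0 : MeasurableSpace Ω} {μ : Measure Ω} {n : ℕ}
    {z w : Ω → EuclideanSpace ℝ (Fin n)} (hzm : AEStronglyMeasurable z μ)
    (hwm : AEStronglyMeasurable w μ)
    (hzsq : Integrable (fun ω => ‖z ω‖ ^ 2) μ) (hwsq : Integrable (fun ω => ‖w ω‖ ^ 2) μ)
    (i : Fin n) : Integrable (fun ω => z ω i * w ω i) μ := by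
  refine Integrable.mono' ((hzsq.add hwsq).div_const 2) ?_ ?_
  · exact ((EuclideanSpace.proj (𝕜 := ℝ) i).continuous.comp_aestronglyMeasurable hzm).mul
      ((EuclideanSpace.proj (𝕜 := ℝ) i).continuous.comp_aestronglyMeasurable hwm)
  · refine Eventually.of_forall fun ω => ?_
    have h1 := coord_sq_le (z ω) i
    have h2 := coord_sq_le (w ω) i
    have : ‖z ω i * w ω i‖ = ‖z ω i‖ * ‖w ω i‖ := norm_mul _ _
    rw [this]
    simp only [Pi.add_apply]
    nlinarith [sq_nonneg (‖z ω i‖ - ‖w ω i‖), norm_nonneg (z ω i), norm_nonneg (w ω i)]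

lemma integral_inner_zero {Ω : Type*} {m' m0 : MeasurableSpace Ω} {μ : Measure Ω}
    [IsProbabilityMeasure μ] (hm : m' ≤ m0) {n : ℕ}
    {z w : Ω → EuclideanSpace ℝ (Fin n)} (hz : StronglyMeasurable[m'] z)
    (hw : Integrable w μ) (hw0 : μ[w | m'] =ᵐ[μ] 0)
    (hzsq : Integrable (fun ω => ‖z ω‖ ^ 2) μ) (hwsq : Integrable (fun ω => ‖w ω‖ ^ 2) μ) :
    ∫ ω, ⟪z ω, w ω⟫ ∂μ = 0 := by
  have hzm : StronglyMeasurable z := hz.mono hm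
  have hprod_int : ∀ i : Fin n, Integrable (fun ω => z ω i * w ω i) μ :=
    fun i => prod_coord_int hzm.aestronglyMeasurable hw.1 hzsq hwsq i
  have hexpand : (fun ω => ⟪z ω, w ω⟫) = fun ω => ∑ i : Fin n, z ω i * w ω i := by
    funext ω
    simp [PiLp.inner_apply, RCLike.inner_apply, mul_comm]
  rw [hexpand, integral_finset_sum _ (fun i _ => hprod_int i)]
  refine Finset.sum_eq_zero fun i _ => ?_
  have hmul := condExp_mul_of_stronglyMeasurable_left (m := m') (mΩ := m0) (μ := μ)
    (f := fun ω => z ω i) (g := fun ω => w ω i)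
    ((EuclideanSpace.proj (𝕜 := ℝ) i).continuous.comp_stronglyMeasurable hz)
    (hprod_int i) ((EuclideanSpace.proj (𝕜 := ℝ) i).integrable_comp hw)
  have hwi0 := (coord_condexp_zero hm hw hw0 i).symm
  have hzero : μ[(fun ω => z ω i) * fun ω => w ω i | m'] =ᵐ[μ] 0 := by
    filter_upwards [hmul, hwi0] with ω h1 h2
    simp only [Pi.mul_apply] at h1 ⊢
    rw [h1, h2]; simp
  have h4 : ∫ ω, z ω i * w ω i ∂μ
      = ∫ ω, (μ[(fun ω => z ω i) * fun ω => w ω i | m']) ω ∂μ :=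
    (integral_condExp hm (f := (fun ω => z ω i) * fun ω => w ω i)).symm
  rw [h4, integral_congr_ae hzero]
  simp

set_option maxHeartbeats 1000000 in
lemma key_ineq {f : E → ℝ} {η L α γ : ℝ} {xstar : E}
    (hf : ContDiff ℝ 1 f)
    (hlip : ∀ a b, ‖gradient f a - gradient f b‖ ≤ L * ‖a - b‖)
    (hsc : ∀ a b, η * ‖a - b‖ ^ 2 ≤ ⟪gradient f a - gradient f b, a - b⟫)
    (hη : 0 < η) (hα : 0 < α) (hαL : α * L ≤ 1)
    (hγpos : 0 < γ) (hγ1 : γ ≤ 1) (hγsq : γ ^ 2 = α * η)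
    (X Y e : E) (g Vv yp vp : E)
    (hg : g = gradient f X)
    (hVv : Vv = X + γ⁻¹ • (X - Y))
    (hyp : yp = X - α • (g + e))
    (hvp : vp = γ • X + (1 - γ) • Vv - (γ⁻¹ * α) • (g + e)) :
    f yp - f xstar + η / 2 * ‖vp - xstar‖ ^ 2 ≤
      (1 - γ) * (f Y - f xstar + η / 2 * ‖Vv - xstar‖ ^ 2) + α * ‖e‖ ^ 2 +
        (α * ⟪g, e⟫ - γ * ⟪(X - xstar) + ((1 - γ) * γ⁻¹) • (X - Y), e⟫) := by
  have hγne : γ ≠ 0 := ne_of_gt hγpos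
  set u : E := (X - xstar) + ((1 - γ) * γ⁻¹) • (X - Y) with hu
  -- vector identities
  have hvpu : vp - xstar = u - (γ⁻¹ * α) • (g + e) := by
    rw [hvp, hVv, hu]; match_scalars <;> field_simp <;> ring
  have huVv : u = γ • (X - xstar) + (1 - γ) • (Vv - xstar) := by
    rw [hVv, hu]; match_scalars <;> field_simp <;> ring
  -- scalar identities
  have hs1 : η * (γ⁻¹ * α) = γ := by field_simp; nlinarith [hγsq]
  have hs2 : η / 2 * (γ⁻¹ * α) ^ 2 = α / 2 := by field_simp; nlinarith [hγsq, sq_nonneg γ]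
  -- expansions
  have n1 : ‖vp - xstar‖ ^ 2 =
      ‖u‖ ^ 2 - 2 * (γ⁻¹ * α) * ⟪u, g + e⟫ + (γ⁻¹ * α) ^ 2 * ‖g + e‖ ^ 2 := by
    rw [hvpu, norm_sub_sq_real, real_inner_smul_right, norm_smul]
    simp only [Real.norm_eq_abs, mul_pow, sq_abs]; ring
  have n2 : ‖g + e‖ ^ 2 = ‖g‖ ^ 2 + 2 * ⟪g, e⟫ + ‖e‖ ^ 2 := norm_add_sq_real g e
  have n3 : ⟪u, g + e⟫ = ⟪u, g⟫ + ⟪u, e⟫ := inner_add_right u g e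
  have n4 : ⟪u, g⟫ = ⟪X - xstar, g⟫ + (1 - γ) * γ⁻¹ * ⟪X - Y, g⟫ := by
    rw [hu, inner_add_left, real_inner_smul_left]
  have n5 : ‖u‖ ^ 2 ≤ γ * ‖X - xstar‖ ^ 2 + (1 - γ) * ‖Vv - xstar‖ ^ 2 := by
    have hexp : ‖u‖ ^ 2 = γ ^ 2 * ‖X - xstar‖ ^ 2
        + 2 * (γ * (1 - γ)) * ⟪X - xstar, Vv - xstar⟫ + (1 - γ) ^ 2 * ‖Vv - xstar‖ ^ 2 := by
      rw [huVv, norm_add_sq_real, real_inner_smul_left, real_inner_smul_right, norm_smul,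
        norm_smul]
      simp only [Real.norm_eq_abs, mul_pow, sq_abs]; ring
    have hin : 2 * ⟪X - xstar, Vv - xstar⟫ ≤ ‖X - xstar‖ ^ 2 + ‖Vv - xstar‖ ^ 2 := by
      have := norm_sub_sq_real (X - xstar) (Vv - xstar)
      nlinarith [sq_nonneg ‖(X - xstar) - (Vv - xstar)‖]
    nlinarith [mul_nonneg (mul_nonneg hγpos.le (sub_nonneg.2 hγ1)) (sub_nonneg.2 hin)]
  -- descent step
  have hA : f yp ≤ f X - α / 2 * ‖g‖ ^ 2 + α / 2 * ‖e‖ ^ 2 := by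
    have h1 := smooth_ub hf hlip X yp
    have e1 : yp - X = -(α • (g + e)) := by rw [hyp]; abel
    have e2 : ⟪gradient f X, yp - X⟫ = -(α * ⟪g, g + e⟫) := by
      rw [e1, inner_neg_right, real_inner_smul_right, hg]
    have e3 : ‖yp - X‖ ^ 2 = α ^ 2 * ‖g + e‖ ^ 2 := by
      rw [e1, norm_neg, norm_smul]; simp only [Real.norm_eq_abs, mul_pow, sq_abs]
    have e4 : ⟪g, g + e⟫ = ‖g‖ ^ 2 + ⟪g, e⟫ := by
      rw [inner_add_right, real_inner_self_eq_norm_sq]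
    have e5 : L / 2 * (α ^ 2 * ‖g + e‖ ^ 2) ≤ α / 2 * ‖g + e‖ ^ 2 := by
      nlinarith [sq_nonneg ‖g + e‖, hα]
    rw [e2, e3, e4] at h1
    nlinarith [h1, n2]
  -- strong convexity steps
  have hE : f X - f xstar + η / 2 * ‖X - xstar‖ ^ 2 ≤ ⟪X - xstar, g⟫ := by
    have h1 := sc_lb hf hsc X xstar
    have e1 : ⟪gradient f X, xstar - X⟫ = -⟪X - xstar, g⟫ := by
      rw [hg, ← neg_sub X xstar, inner_neg_right, real_inner_comm]
    have e2 : ‖xstar - X‖ = ‖X - xstar‖ := norm_sub_rev _ _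
    rw [e1, e2] at h1; linarith
  have hF : f X - f Y ≤ ⟪X - Y, g⟫ := by
    have h1 := sc_lb hf hsc X Y
    have e1 : ⟪gradient f X, Y - X⟫ = -⟪X - Y, g⟫ := by
      rw [hg, ← neg_sub X Y, inner_neg_right, real_inner_comm]
    rw [e1] at h1
    nlinarith [sq_nonneg ‖Y - X‖, hη]
  -- pre-multiplied versions
  have hE' : γ * (f X - f xstar + η / 2 * ‖X - xstar‖ ^ 2) ≤ γ * ⟪X - xstar, g⟫ :=
    mul_le_mul_of_nonneg_left hE hγpos.le
  have hF' : (1 - γ) * (f X - f Y) ≤ (1 - γ) * ⟪X - Y, g⟫ :=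
    mul_le_mul_of_nonneg_left hF (sub_nonneg.2 hγ1)
  have n5' : η / 2 * ‖u‖ ^ 2 ≤ η / 2 * (γ * ‖X - xstar‖ ^ 2 + (1 - γ) * ‖Vv - xstar‖ ^ 2) :=
    mul_le_mul_of_nonneg_left n5 (by positivity)
  -- conclude
  have hcross : γ * ⟪u, g⟫ = γ * ⟪X - xstar, g⟫ + (1 - γ) * ⟪X - Y, g⟫ := by
    rw [n4]; field_simp
  have c1 : η / 2 * ‖vp - xstar‖ ^ 2 =
      η / 2 * ‖u‖ ^ 2 - γ * ⟪u, g⟫ - γ * ⟪u, e⟫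
        + α / 2 * ‖g‖ ^ 2 + α * ⟪g, e⟫ + α / 2 * ‖e‖ ^ 2 := by
    rw [n1, n3, n2]
    linear_combination (-(⟪u, g⟫ + ⟪u, e⟫)) * hs1
      + (‖g‖ ^ 2 + 2 * ⟪g, e⟫ + ‖e‖ ^ 2) * hs2
  linarith [c1, hA, n5', hcross, hE', hF']

/-- **Proposition 2 (geometric rate for variance-reduced accelerated SGD).** -/
theorem stmt_4
    {m : ℕ} {Ω : Type*} {m0 : MeasurableSpace Ω} {μ : Measure Ω}
    [IsProbabilityMeasure μ] (ℱ : Filtration ℕ m0)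
    (f : EuclideanSpace ℝ (Fin m) → ℝ) (xstar : EuclideanSpace ℝ (Fin m))
    (x y w : ℕ → Ω → EuclideanSpace ℝ (Fin m)) (N : ℕ → ℕ)
    (η L ν α β γ ρ₂ : ℝ)
    (hη : 0 < η) (hηL : η ≤ L) (hν : 0 < ν)
    (hf : ContDiff ℝ 1 f)
    (hlip : ∀ a b, ‖gradient f a - gradient f b‖ ≤ L * ‖a - b‖)
    (hsc : ∀ a b, η * ‖a - b‖ ^ 2 ≤ (inner ℝ (gradient f a - gradient f b) (a - b) : ℝ))
    (hmin : ∀ z, f xstar ≤ f z)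
    (hadaptedx : ∀ k, StronglyMeasurable[ℱ k] (x k))
    (hadaptedy : ∀ k, StronglyMeasurable[ℱ k] (y k))
    (hwint : ∀ k, Integrable (w k) μ)
    (hwsqint : ∀ k, Integrable (fun ω => ‖w k ω‖ ^ 2) μ)
    (hw0 : ∀ k, μ[w k | ℱ k] =ᵐ[μ] 0)
    (hwvar : ∀ k, μ[fun ω => ‖w k ω‖ ^ 2 | ℱ k] ≤ᵐ[μ] fun _ => ν ^ 2 / N k)
    (hxint : ∀ k, Integrable (fun ω => ‖x k ω - xstar‖ ^ 2) μ)
    (hyint : ∀ k, Integrable (fun ω => ‖y k ω - xstar‖ ^ 2) μ)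
    (hfyint : ∀ k, Integrable (fun ω => f (y k ω)) μ)
    (hα : 0 < α) (hα' : α ≤ 1 / L)
    (hγ : γ = Real.sqrt (α * η)) (hβ : β = (1 - γ) / (1 + γ))
    (hρ₂ : ρ₂ ∈ Set.Ioo (1 - γ) 1)
    (hN : ∀ k, N k = ⌈(ρ₂ ^ (k + 1))⁻¹⌉₊)
    (hinit : x 0 = y 0)
    (hrec1 : ∀ k ω, y (k + 1) ω = x k ω - α • (gradient f (x k ω) + w k ω))
    (hrec2 : ∀ k ω, x (k + 1) ω = y (k + 1) ω + β • (y (k + 1) ω - y k ω)) :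
    (∀ k, (∫ ω, f (y k ω) ∂μ) - f xstar ≤
        ρ₂ ^ k * ((η + L) / 2 * (∫ ω, ‖x 0 ω - xstar‖ ^ 2 ∂μ)
          + ρ₂ * ν ^ 2 / (ρ₂ - (1 - γ)) * (α + (1 - γ) * γ / (2 * η)))) ∧
      ∃ c : ℝ, 0 < c ∧ ∀ k, ∫ ω, ‖x k ω - xstar‖ ^ 2 ∂μ ≤ c * ρ₂ ^ k := by
  -- basic scalar facts
  have hL : 0 < L := lt_of_lt_of_le hη hηL
  have hαL : α * L ≤ 1 := by rw [le_div_iff₀ hL] at hα'; exact hα'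
  have hαη : 0 < α * η := mul_pos hα hη
  have hγpos : 0 < γ := by rw [hγ]; exact Real.sqrt_pos.2 hαη
  have hγne : γ ≠ 0 := ne_of_gt hγpos
  have hγsq : γ ^ 2 = α * η := by rw [hγ, sq_sqrt hαη.le]
  have hγ1 : γ ≤ 1 := by
    rw [hγ]
    refine Real.sqrt_le_one.2 ?_
    nlinarith
  have h1γ : (0:ℝ) < 1 + γ := by linarith
  have h1γne : (1:ℝ) + γ ≠ 0 := ne_of_gt h1γ
  have hρgt : 1 - γ < ρ₂ := hρ₂.1
  have hρlt : ρ₂ < 1 := hρ₂.2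
  have hρpos : 0 < ρ₂ := lt_of_le_of_lt (by linarith) hρgt
  have hgap : 0 < ρ₂ - (1 - γ) := by linarith
  have gstar : gradient f xstar = 0 := grad_min_zero hf hmin
  -- the v sequence
  set v : ℕ → Ω → EuclideanSpace ℝ (Fin m) :=
    fun k ω => x k ω + γ⁻¹ • (x k ω - y k ω) with hv
  have hv0 : ∀ ω, v 0 ω = x 0 ω := by
    intro ω; simp only [hv, hinit]; simp
  have hvrec : ∀ k ω, v (k + 1) ω =
      γ • x k ω + (1 - γ) • v k ω - (γ⁻¹ * α) • (gradient f (x k ω) + w k ω) := by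
    intro k ω
    simp only [hv]
    rw [hrec2 k ω, hrec1 k ω, hβ]
    match_scalars <;> field_simp <;> ring
  -- the gradient and correction processes
  set g : ℕ → Ω → EuclideanSpace ℝ (Fin m) := fun k ω => gradient f (x k ω) with hg
  set Z : ℕ → Ω → EuclideanSpace ℝ (Fin m) := fun k ω =>
    α • g k ω - γ • ((x k ω - xstar) + ((1 - γ) * γ⁻¹) • (x k ω - y k ω)) with hZ
  -- pointwise key inequality
  have key : ∀ k ω,
      f (y (k+1) ω) - f xstar + η / 2 * ‖v (k+1) ω - xstar‖ ^ 2 ≤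
        (1 - γ) * (f (y k ω) - f xstar + η / 2 * ‖v k ω - xstar‖ ^ 2)
          + α * ‖w k ω‖ ^ 2 + ⟪Z k ω, w k ω⟫ := by
    intro k ω
    have h := key_ineq (xstar := xstar) hf hlip hsc hη hα hαL hγpos hγ1 hγsq
      (x k ω) (y k ω) (w k ω) (g k ω) (v k ω) (y (k+1) ω) (v (k+1) ω)
      rfl rfl (hrec1 k ω) (hvrec k ω)
    have hZe : ⟪Z k ω, w k ω⟫ =
        α * ⟪g k ω, w k ω⟫
          - γ * ⟪(x k ω - xstar) + ((1 - γ) * γ⁻¹) • (x k ω - y k ω), w k ω⟫ := by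
      simp only [hZ]
      rw [inner_sub_left, real_inner_smul_left, real_inner_smul_left]
    rw [hZe]
    exact h
  -- measurability
  have hxm : ∀ k, StronglyMeasurable (x k) := fun k => (hadaptedx k).mono (ℱ.le k)
  have hym : ∀ k, StronglyMeasurable (y k) := fun k => (hadaptedy k).mono (ℱ.le k)
  have hvadapt : ∀ k, StronglyMeasurable[ℱ k] (v k) := by
    intro k
    exact (hadaptedx k).add (((hadaptedx k).sub (hadaptedy k)).const_smul γ⁻¹)
  have hgadapt : ∀ k, StronglyMeasurable[ℱ k] (g k) := by
    intro k
    exact (cont_grad hf).comp_stronglyMeasurable (hadaptedx k)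
  have hZadapt : ∀ k, StronglyMeasurable[ℱ k] (Z k) := by
    intro k
    exact ((hgadapt k).const_smul α).sub
      ((((hadaptedx k).sub stronglyMeasurable_const).add
        (((hadaptedx k).sub (hadaptedy k)).const_smul ((1 - γ) * γ⁻¹))).const_smul γ)
  -- integrability
  have hvsq : ∀ k, Integrable (fun ω => ‖v k ω - xstar‖ ^ 2) μ := by
    intro k
    refine Integrable.mono' (((hxint k).const_mul (2 * (1 + γ⁻¹) ^ 2)).add
      ((hyint k).const_mul (2 * γ⁻¹ ^ 2))) ?_ (Eventually.of_forall fun ω => ?_)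
    · exact ((((hvadapt k).mono (ℱ.le k)).sub stronglyMeasurable_const).norm.pow
        2).aestronglyMeasurable
    · have hvd : v k ω - xstar = (x k ω - xstar) + γ⁻¹ • ((x k ω - xstar) - (y k ω - xstar)) := by
        simp only [hv]; match_scalars <;> ring
      have htri : ‖v k ω - xstar‖ ≤ (1 + γ⁻¹) * ‖x k ω - xstar‖ + γ⁻¹ * ‖y k ω - xstar‖ := by
        rw [hvd]
        have h1 : ‖(x k ω - xstar) + γ⁻¹ • ((x k ω - xstar) - (y k ω - xstar))‖ ≤
            ‖x k ω - xstar‖ + ‖γ⁻¹ • ((x k ω - xstar) - (y k ω - xstar))‖ := norm_add_le _ _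
        have h2 : ‖γ⁻¹ • ((x k ω - xstar) - (y k ω - xstar))‖ =
            γ⁻¹ * ‖(x k ω - xstar) - (y k ω - xstar)‖ := by
          rw [norm_smul, Real.norm_eq_abs, abs_of_pos (inv_pos.2 hγpos)]
        have h3 : ‖(x k ω - xstar) - (y k ω - xstar)‖ ≤ ‖x k ω - xstar‖ + ‖y k ω - xstar‖ :=
          norm_sub_le _ _
        have hγinv : (0:ℝ) ≤ γ⁻¹ := (inv_pos.2 hγpos).le
        rw [h2] at h1
        nlinarith
      have hnn : (0:ℝ) ≤ ‖v k ω - xstar‖ := norm_nonneg _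
      rw [Real.norm_eq_abs, abs_of_nonneg (sq_nonneg _)]
      simp only [Pi.add_apply]
      have hxnn : (0:ℝ) ≤ ‖x k ω - xstar‖ := norm_nonneg _
      have hynn : (0:ℝ) ≤ ‖y k ω - xstar‖ := norm_nonneg _
      have hγinv : (0:ℝ) ≤ γ⁻¹ := (inv_pos.2 hγpos).le
      nlinarith [pow_le_pow_left₀ hnn htri 2,
        sq_nonneg ((1 + γ⁻¹) * ‖x k ω - xstar‖ - γ⁻¹ * ‖y k ω - xstar‖)]
  have hgsq : ∀ k, Integrable (fun ω => ‖g k ω‖ ^ 2) μ := by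
    intro k
    refine Integrable.mono' ((hxint k).const_mul (L ^ 2)) ?_ (Eventually.of_forall fun ω => ?_)
    · exact ((((hgadapt k).mono (ℱ.le k))).norm.pow 2).aestronglyMeasurable
    · have h1 : ‖g k ω‖ ≤ L * ‖x k ω - xstar‖ := by
        have := hlip (x k ω) xstar
        rwa [gstar, sub_zero] at this
      rw [Real.norm_eq_abs, abs_of_nonneg (sq_nonneg _)]
      nlinarith [norm_nonneg (g k ω), norm_nonneg (x k ω - xstar)]
  have hZsq : ∀ k, Integrable (fun ω => ‖Z k ω‖ ^ 2) μ := by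
    intro k
    set c1 : ℝ := (1 - γ) * γ⁻¹ with hc1
    have hc1nn : 0 ≤ c1 := mul_nonneg (by linarith) (inv_pos.2 hγpos).le
    refine Integrable.mono' ((((hgsq k).const_mul (2 * α ^ 2)).add
      ((hxint k).const_mul (4 * γ ^ 2 * (1 + c1) ^ 2))).add
      ((hyint k).const_mul (4 * γ ^ 2 * c1 ^ 2))) ?_ (Eventually.of_forall fun ω => ?_)
    · exact ((((hZadapt k).mono (ℱ.le k))).norm.pow 2).aestronglyMeasurable
    · set u := (x k ω - xstar) + c1 • (x k ω - y k ω) with hu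
      have hud : u = (1 + c1) • (x k ω - xstar) - c1 • (y k ω - xstar) := by
        rw [hu]; match_scalars <;> ring
      have h1 : ‖u‖ ≤ (1 + c1) * ‖x k ω - xstar‖ + c1 * ‖y k ω - xstar‖ := by
        rw [hud]
        refine (norm_sub_le _ _).trans ?_
        rw [norm_smul, norm_smul, Real.norm_eq_abs, Real.norm_eq_abs,
          abs_of_nonneg hc1nn, abs_of_nonneg (by linarith : (0:ℝ) ≤ 1 + c1)]
      have h2 : ‖Z k ω‖ ≤ α * ‖g k ω‖ + γ * ‖u‖ := by
        simp only [hZ, ← hu]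
        refine (norm_sub_le _ _).trans ?_
        rw [norm_smul, norm_smul, Real.norm_eq_abs, Real.norm_eq_abs,
          abs_of_pos hα, abs_of_pos hγpos]
      rw [Real.norm_eq_abs, abs_of_nonneg (sq_nonneg _)]
      simp only [Pi.add_apply]
      have hun : (0:ℝ) ≤ ‖u‖ := norm_nonneg _
      have hgn : (0:ℝ) ≤ ‖g k ω‖ := norm_nonneg _
      have hxn : (0:ℝ) ≤ ‖x k ω - xstar‖ := norm_nonneg _
      have hyn : (0:ℝ) ≤ ‖y k ω - xstar‖ := norm_nonneg _
      have hZn : (0:ℝ) ≤ ‖Z k ω‖ := norm_nonneg _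
      have hsq1 : ‖Z k ω‖ ^ 2 ≤ 2 * α ^ 2 * ‖g k ω‖ ^ 2 + 2 * γ ^ 2 * ‖u‖ ^ 2 := by
        nlinarith [sq_nonneg (α * ‖g k ω‖ - γ * ‖u‖), mul_nonneg hα.le hgn,
          mul_nonneg hγpos.le hun]
      have hsq2 : ‖u‖ ^ 2 ≤ 2 * (1 + c1) ^ 2 * ‖x k ω - xstar‖ ^ 2
          + 2 * c1 ^ 2 * ‖y k ω - xstar‖ ^ 2 := by
        nlinarith [sq_nonneg ((1 + c1) * ‖x k ω - xstar‖ - c1 * ‖y k ω - xstar‖),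
          mul_nonneg (mul_nonneg (by linarith : (0:ℝ) ≤ 1 + c1) hxn) (mul_nonneg hc1nn hyn)]
      nlinarith [mul_nonneg (mul_nonneg (by norm_num : (0:ℝ) ≤ 2) (sq_nonneg γ)) (sq_nonneg ‖u‖)]
  have hinner_int : ∀ k, Integrable (fun ω => ⟪Z k ω, w k ω⟫) μ := by
    intro k
    have hexpand : (fun ω => ⟪Z k ω, w k ω⟫) = fun ω => ∑ i : Fin m, Z k ω i * w k ω i := by
      funext ω; simp [PiLp.inner_apply, RCLike.inner_apply, mul_comm]
    rw [hexpand]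
    exact integrable_finset_sum _ fun i _ =>
      prod_coord_int ((hZadapt k).mono (ℱ.le k)).aestronglyMeasurable (hwint k).1
        (hZsq k) (hwsqint k) i
  -- expected noise bound
  have hwbound : ∀ k, (∫ ω, ‖w k ω‖ ^ 2 ∂μ) ≤ ν ^ 2 * ρ₂ ^ (k + 1) := by
    intro k
    have hNk : (ρ₂ ^ (k + 1))⁻¹ ≤ (N k : ℝ) := by rw [hN]; exact Nat.le_ceil _
    have hNpos : (0:ℝ) < N k := lt_of_lt_of_le (inv_pos.2 (pow_pos hρpos _)) hNk
    have h1 : (1:ℝ) ≤ ρ₂ ^ (k + 1) * N k := by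
      rw [← mul_inv_cancel₀ (ne_of_gt (pow_pos hρpos (k + 1)))]
      exact mul_le_mul_of_nonneg_left hNk (pow_pos hρpos _).le
    have h2 : (∫ ω, ‖w k ω‖ ^ 2 ∂μ) ≤ ν ^ 2 / N k := by
      have h3 : (∫ ω, ‖w k ω‖ ^ 2 ∂μ) = ∫ ω, (μ[fun ω => ‖w k ω‖ ^ 2 | ℱ k]) ω ∂μ :=
        (integral_condExp (ℱ.le k)).symm
      rw [h3]
      have h4 := integral_mono_ae integrable_condExp (integrable_const (ν ^ 2 / N k)) (hwvar k)
      simpa using h4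
    refine h2.trans ?_
    rw [div_le_iff₀ hNpos]
    nlinarith [sq_nonneg ν, pow_pos hρpos (k + 1)]
  -- the Lyapunov sequence
  set A : ℕ → ℝ := fun k =>
    ∫ ω, (f (y k ω) - f xstar + η / 2 * ‖v k ω - xstar‖ ^ 2) ∂μ with hA
  have hAint : ∀ k,
      Integrable (fun ω => f (y k ω) - f xstar + η / 2 * ‖v k ω - xstar‖ ^ 2) μ := by
    intro k
    exact ((hfyint k).sub (integrable_const _)).add ((hvsq k).const_mul _)
  have hAnonneg : ∀ k, 0 ≤ A k := by
    intro k
    refine integral_nonneg fun ω => ?_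
    simp only [Pi.zero_apply]
    have h1 := hmin (y k ω)
    have h2 : 0 ≤ η / 2 * ‖v k ω - xstar‖ ^ 2 := by positivity
    linarith
  have hstep : ∀ k, A (k + 1) ≤ (1 - γ) * A k + α * (ν ^ 2 * ρ₂ ^ (k + 1)) := by
    intro k
    have hRint1 : Integrable (fun ω =>
        (1 - γ) * (f (y k ω) - f xstar + η / 2 * ‖v k ω - xstar‖ ^ 2)
          + α * ‖w k ω‖ ^ 2) μ :=
      ((hAint k).const_mul _).add ((hwsqint k).const_mul _)
    have hmono := integral_mono (hAint (k + 1)) (hRint1.add (hinner_int k))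
      (fun ω => key k ω)
    simp only [Pi.add_apply] at hmono
    have e1 : (∫ ω, ((1 - γ) * (f (y k ω) - f xstar + η / 2 * ‖v k ω - xstar‖ ^ 2)
          + α * ‖w k ω‖ ^ 2 + ⟪Z k ω, w k ω⟫) ∂μ)
        = (∫ ω, ((1 - γ) * (f (y k ω) - f xstar + η / 2 * ‖v k ω - xstar‖ ^ 2)
          + α * ‖w k ω‖ ^ 2) ∂μ) + ∫ ω, ⟪Z k ω, w k ω⟫ ∂μ :=
      integral_add hRint1 (hinner_int k)
    have e2 : (∫ ω, ((1 - γ) * (f (y k ω) - f xstar + η / 2 * ‖v k ω - xstar‖ ^ 2)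
          + α * ‖w k ω‖ ^ 2) ∂μ)
        = (∫ ω, (1 - γ) * (f (y k ω) - f xstar + η / 2 * ‖v k ω - xstar‖ ^ 2) ∂μ)
          + ∫ ω, α * ‖w k ω‖ ^ 2 ∂μ :=
      integral_add ((hAint k).const_mul _) ((hwsqint k).const_mul _)
    have e3 : (∫ ω, (1 - γ) * (f (y k ω) - f xstar + η / 2 * ‖v k ω - xstar‖ ^ 2) ∂μ)
        = (1 - γ) * A k := integral_const_mul _ _
    have e4 : (∫ ω, α * ‖w k ω‖ ^ 2 ∂μ) = α * ∫ ω, ‖w k ω‖ ^ 2 ∂μ := integral_const_mul _ _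
    have e5 := integral_inner_zero (ℱ.le k) (hZadapt k) (hwint k) (hw0 k) (hZsq k) (hwsqint k)
    have h5 : α * (∫ ω, ‖w k ω‖ ^ 2 ∂μ) ≤ α * (ν ^ 2 * ρ₂ ^ (k + 1)) :=
      mul_le_mul_of_nonneg_left (hwbound k) hα.le
    rw [e1, e2, e3, e4, e5] at hmono
    simp only [hA] at hmono ⊢
    linarith
  -- geometric decay by induction
  set M : ℝ := A 0 + α * ν ^ 2 * ρ₂ / (ρ₂ - (1 - γ)) with hM
  have hq0 : 0 ≤ α * ν ^ 2 * ρ₂ / (ρ₂ - (1 - γ)) :=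
    div_nonneg (by positivity) hgap.le
  have hMnn : 0 ≤ M := by
    simp only [hM]
    linarith [hAnonneg 0]
  have hMge : α * ν ^ 2 * ρ₂ ≤ (ρ₂ - (1 - γ)) * M := by
    have hq : (ρ₂ - (1 - γ)) * (α * ν ^ 2 * ρ₂ / (ρ₂ - (1 - γ))) = α * ν ^ 2 * ρ₂ := by
      field_simp
    rw [hM, mul_add]
    linarith [hq, mul_nonneg hgap.le (hAnonneg 0)]
  have hdecay : ∀ k, A k ≤ ρ₂ ^ k * M := by
    intro k
    induction k with
    | zero =>
      simp only [pow_zero, one_mul, hM]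
      linarith [hq0]
    | succ k ih =>
      have h1 := hstep k
      have h2 : (1 - γ) * A k ≤ (1 - γ) * (ρ₂ ^ k * M) :=
        mul_le_mul_of_nonneg_left ih (by linarith)
      have h3 := mul_le_mul_of_nonneg_left hMge (pow_pos hρpos k).le
      rw [pow_succ ρ₂ k] at h1 ⊢
      nlinarith [pow_pos hρpos k]
  -- bound A 0
  have hA0 : A 0 ≤ (η + L) / 2 * ∫ ω, ‖x 0 ω - xstar‖ ^ 2 ∂μ := by
    have hpt : ∀ ω, f (y 0 ω) - f xstar + η / 2 * ‖v 0 ω - xstar‖ ^ 2 ≤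
        (η + L) / 2 * ‖x 0 ω - xstar‖ ^ 2 := by
      intro ω
      have hy0 : y 0 ω = x 0 ω := by rw [← hinit]
      have hub := smooth_ub hf hlip xstar (x 0 ω)
      rw [gstar] at hub
      simp only [inner_zero_left] at hub
      rw [hy0, hv0 ω]
      have : ‖x 0 ω - xstar‖ = ‖x 0 ω - xstar‖ := rfl
      nlinarith [sq_nonneg ‖x 0 ω - xstar‖]
    calc A 0 ≤ ∫ ω, (η + L) / 2 * ‖x 0 ω - xstar‖ ^ 2 ∂μ :=
          integral_mono (hAint 0) ((hxint 0).const_mul _) hpt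
      _ = (η + L) / 2 * ∫ ω, ‖x 0 ω - xstar‖ ^ 2 ∂μ := integral_const_mul _ _
  -- final constant comparison
  set C : ℝ := (η + L) / 2 * (∫ ω, ‖x 0 ω - xstar‖ ^ 2 ∂μ)
      + ρ₂ * ν ^ 2 / (ρ₂ - (1 - γ)) * (α + (1 - γ) * γ / (2 * η)) with hC
  have hMC : M ≤ C := by
    rw [hM, hC]
    have h1 : α * ν ^ 2 * ρ₂ / (ρ₂ - (1 - γ)) ≤
        ρ₂ * ν ^ 2 / (ρ₂ - (1 - γ)) * (α + (1 - γ) * γ / (2 * η)) := by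
      have hnn : 0 ≤ ρ₂ * ν ^ 2 / (ρ₂ - (1 - γ)) * ((1 - γ) * γ / (2 * η)) :=
        mul_nonneg (div_nonneg (by positivity) hgap.le)
          (div_nonneg (mul_nonneg (by linarith) hγpos.le) (by positivity))
      have he : ρ₂ * ν ^ 2 / (ρ₂ - (1 - γ)) * α = α * ν ^ 2 * ρ₂ / (ρ₂ - (1 - γ)) := by
        ring
      rw [mul_add]
      linarith [he]
    linarith [hA0]
  -- part 1
  have part1 : ∀ k, (∫ ω, f (y k ω) ∂μ) - f xstar ≤ ρ₂ ^ k * C := by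
    intro k
    have h1 : (∫ ω, f (y k ω) ∂μ) - f xstar = ∫ ω, (f (y k ω) - f xstar) ∂μ := by
      rw [integral_sub (hfyint k) (integrable_const _), integral_const]
      simp
    have h2 : (∫ ω, (f (y k ω) - f xstar) ∂μ) ≤ A k := by
      refine integral_mono ((hfyint k).sub (integrable_const _)) (hAint k) fun ω => ?_
      have := sq_nonneg ‖v k ω - xstar‖
      nlinarith
    have h3 : ρ₂ ^ k * M ≤ ρ₂ ^ k * C := mul_le_mul_of_nonneg_left hMC (pow_pos hρpos k).le
    linarith [hdecay k, h1 ▸ h2]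
  have hcpos : 0 < 8 * M / η + 1 := by
    have : 0 ≤ 8 * M / η := div_nonneg (by linarith) hη.le
    linarith
  refine ⟨part1, ⟨8 * M / η + 1, hcpos, fun k => ?_⟩⟩
  -- part 2
  have hysq_le : (∫ ω, ‖y k ω - xstar‖ ^ 2 ∂μ) ≤ 2 / η * A k := by
    have hpt : ∀ ω, ‖y k ω - xstar‖ ^ 2 ≤
        2 / η * (f (y k ω) - f xstar + η / 2 * ‖v k ω - xstar‖ ^ 2) := by
      intro ω
      have hlb := sc_lb hf hsc xstar (y k ω)
      rw [gstar] at hlb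
      simp only [inner_zero_left] at hlb
      have := sq_nonneg ‖v k ω - xstar‖
      rw [div_mul_eq_mul_div, le_div_iff₀ hη]
      nlinarith
    calc (∫ ω, ‖y k ω - xstar‖ ^ 2 ∂μ)
        ≤ ∫ ω, 2 / η * (f (y k ω) - f xstar + η / 2 * ‖v k ω - xstar‖ ^ 2) ∂μ :=
          integral_mono (hyint k) ((hAint k).const_mul _) hpt
      _ = 2 / η * A k := integral_const_mul _ _
  have hvsq_le : (∫ ω, ‖v k ω - xstar‖ ^ 2 ∂μ) ≤ 2 / η * A k := by
    have hpt : ∀ ω, ‖v k ω - xstar‖ ^ 2 ≤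
        2 / η * (f (y k ω) - f xstar + η / 2 * ‖v k ω - xstar‖ ^ 2) := by
      intro ω
      have := hmin (y k ω)
      rw [div_mul_eq_mul_div, le_div_iff₀ hη]
      nlinarith
    calc (∫ ω, ‖v k ω - xstar‖ ^ 2 ∂μ)
        ≤ ∫ ω, 2 / η * (f (y k ω) - f xstar + η / 2 * ‖v k ω - xstar‖ ^ 2) ∂μ :=
          integral_mono (hvsq k) ((hAint k).const_mul _) hpt
      _ = 2 / η * A k := integral_const_mul _ _
  have hxpt : ∀ ω, ‖x k ω - xstar‖ ^ 2 ≤ 2 * ‖y k ω - xstar‖ ^ 2 + 2 * ‖v k ω - xstar‖ ^ 2 := by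
    intro ω
    have hxyv : x k ω - xstar =
        (1 / (1 + γ)) • (y k ω - xstar) + (γ / (1 + γ)) • (v k ω - xstar) := by
      simp only [hv]; match_scalars <;> field_simp <;> ring
    have h1 : ‖x k ω - xstar‖ ≤ ‖y k ω - xstar‖ + ‖v k ω - xstar‖ := by
      rw [hxyv]
      refine (norm_add_le _ _).trans ?_
      rw [norm_smul, norm_smul, Real.norm_eq_abs, Real.norm_eq_abs,
        abs_of_pos (by positivity : (0:ℝ) < 1 / (1 + γ)),
        abs_of_pos (by positivity : (0:ℝ) < γ / (1 + γ))]
      have hc1 : 1 / (1 + γ) ≤ 1 := by rw [div_le_one h1γ]; linarith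
      have hc2 : γ / (1 + γ) ≤ 1 := by rw [div_le_one h1γ]; linarith
      nlinarith [norm_nonneg (y k ω - xstar), norm_nonneg (v k ω - xstar)]
    nlinarith [norm_nonneg (x k ω - xstar), norm_nonneg (y k ω - xstar),
      norm_nonneg (v k ω - xstar), sq_nonneg (‖y k ω - xstar‖ - ‖v k ω - xstar‖)]
  have hxsq_le : (∫ ω, ‖x k ω - xstar‖ ^ 2 ∂μ) ≤ 8 / η * A k := by
    have h1 : (∫ ω, ‖x k ω - xstar‖ ^ 2 ∂μ) ≤
        ∫ ω, (2 * ‖y k ω - xstar‖ ^ 2 + 2 * ‖v k ω - xstar‖ ^ 2) ∂μ :=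
      integral_mono (hxint k) (((hyint k).const_mul _).add ((hvsq k).const_mul _)) hxpt
    have e1 : (∫ ω, (2 * ‖y k ω - xstar‖ ^ 2 + 2 * ‖v k ω - xstar‖ ^ 2) ∂μ)
        = (∫ ω, 2 * ‖y k ω - xstar‖ ^ 2 ∂μ) + ∫ ω, 2 * ‖v k ω - xstar‖ ^ 2 ∂μ :=
      integral_add ((hyint k).const_mul _) ((hvsq k).const_mul _)
    have e2 : (∫ ω, 2 * ‖y k ω - xstar‖ ^ 2 ∂μ) = 2 * ∫ ω, ‖y k ω - xstar‖ ^ 2 ∂μ :=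
      integral_const_mul _ _
    have e3 : (∫ ω, 2 * ‖v k ω - xstar‖ ^ 2 ∂μ) = 2 * ∫ ω, ‖v k ω - xstar‖ ^ 2 ∂μ :=
      integral_const_mul _ _
    rw [e1, e2, e3] at h1
    have := hAnonneg k
    have h2 : 2 * (2 / η * A k) + 2 * (2 / η * A k) = 8 / η * A k := by ring
    linarith [hysq_le, hvsq_le, h1]
  have h3 : 8 / η * A k ≤ 8 / η * (ρ₂ ^ k * M) :=
    mul_le_mul_of_nonneg_left (hdecay k) (by positivity)
  have h4 : 8 / η * (ρ₂ ^ k * M) ≤ (8 * M / η + 1) * ρ₂ ^ k := by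
    have heq : 8 / η * (ρ₂ ^ k * M) = 8 * M / η * ρ₂ ^ k := by ring
    rw [heq, add_mul, one_mul]
    linarith [pow_pos hρpos k]
  linarith
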